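/- Let X be a Tychonoff space, let Z be a closed subspace of X, and let V(X) be the free topological vector space over X. Then the linear span V(Z,X) of i(Z) in V(X) is a closed vector subspace of V(X). -/

import Mathlib

open Topology Set

universe u v w

/-- `IsFreeTVS V i` says that the (real) topological vector space `V` together with the
continuous map `i : X → V` is the free topological vector space over `X`: every continuous
map from `X` to a topological vector space `E` extends uniquely to a continuous linear
operator `V →L[ℝ] E`. -/
def IsFreeTVS {X : Type u} [TopologicalSpace X] (V : Type v) [AddCommGroup V] [Module ℝ V]
    [TopologicalSpace V] [IsTopologicalAddGroup V] [ContinuousSMul ℝ V] (i : X → V) : Prop :=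
  Continuous i ∧
    ∀ (E : Type w) [AddCommGroup E] [Module ℝ E] [TopologicalSpace E]
      [IsTopologicalAddGroup E] [ContinuousSMul ℝ E] (f : X → E),
      Continuous f → ∃! g : V →L[ℝ] E, ∀ x, g (i x) = f x

/-- `SPn i n` is the set `SP_n(X) = {λ₁x₁ + ⋯ + λₙxₙ : λᵢ ∈ [−n,n], xᵢ ∈ X}` inside `V`. -/
def SPn {X : Type u} {V : Type v} [AddCommGroup V] [Module ℝ V]
    (i : X → V) (n : ℕ) : Set V :=
  {v | ∃ (c : Fin n → ℝ) (x : Fin n → X),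
    (∀ j, c j ∈ Set.Icc (-(n : ℝ)) (n : ℝ)) ∧ v = ∑ j, c j • i (x j)}

/-- If `Z` is a closed subspace of a Tychonoff space `X` and `(V, i)` is the
free topological vector space over `X`, then the linear span `V(Z,X)` of `i(Z)` in `V` is a
closed vector subspace of `V`. -/
theorem isClosed_span_of_isClosed
    {X : Type u} [TopologicalSpace X] [T35Space X]
    (Z : Set X) (hZ : IsClosed Z)
    (V : Type v) [AddCommGroup V] [Module ℝ V] [TopologicalSpace V]
    [IsTopologicalAddGroup V] [ContinuousSMul ℝ V] (i : X → V)
    (hV : IsFreeTVS V i) :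
    IsClosed ((Submodule.span ℝ (i '' Z) : Submodule ℝ V) : Set V) := by
  classical
  obtain ⟨hi, hext⟩ := hV
  -- Step 1: the span of the range of `i` is everything.
  have hspan : Submodule.span ℝ (Set.range i) = ⊤ := by
    set N := Submodule.span ℝ (Set.range i) with hN
    rw [eq_top_iff]
    intro v _
    by_contra hv
    -- a linear functional vanishing on N but not at v
    have hmk : N.mkQ v ≠ 0 := by
      rw [Submodule.mkQ_apply, Ne, Submodule.Quotient.mk_eq_zero]
      exact hv
    obtain ⟨φ, hφ⟩ : ∃ φ : Module.Dual ℝ (V ⧸ N), φ (N.mkQ v) ≠ 0 := by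
      by_contra h
      push_neg at h
      exact hmk ((Module.forall_dual_apply_eq_zero_iff ℝ _).mp h)
    let ℓ : V →ₗ[ℝ] ℝ := φ.comp N.mkQ
    have hℓi : ∀ x, ℓ (i x) = 0 := by
      intro x
      have : N.mkQ (i x) = 0 := by
        rw [Submodule.mkQ_apply, Submodule.Quotient.mk_eq_zero]
        exact Submodule.subset_span (Set.mem_range_self x)
      simp [ℓ, this]
    -- indiscrete topology on ULift ℝ
    letI : TopologicalSpace (ULift.{u_1} ℝ) := ⊤
    haveI : IsTopologicalAddGroup (ULift.{u_1} ℝ) :=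
      { continuous_add := continuous_top, continuous_neg := continuous_top }
    haveI : ContinuousSMul ℝ (ULift.{u_1} ℝ) := ⟨continuous_top⟩
    obtain ⟨g, hg, hu⟩ := hext (ULift.{u_1} ℝ) (fun _ => 0) continuous_top
    let up : ℝ →ₗ[ℝ] ULift.{u_1} ℝ := ULift.moduleEquiv.symm.toLinearMap
    let g1 : V →L[ℝ] ULift.{u_1} ℝ := ⟨up.comp ℓ, continuous_top⟩
    have h1 : g1 = g := hu g1 (fun x => by
      show up (ℓ (i x)) = 0
      rw [hℓi x, map_zero])
    have h0 : (0 : V →L[ℝ] ULift.{u_1} ℝ) = g := hu 0 (fun x => rfl)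
    have hg10 : g1 = 0 := h1.trans h0.symm
    have : up (ℓ v) = 0 := by
      have := congrArg (fun h : V →L[ℝ] ULift.{u_1} ℝ => h v) hg10
      simpa [g1] using this
    have : ℓ v = 0 := by
      have := congrArg ULift.down this
      simpa [up] using this
    exact hφ this
  -- instances for ULift ℝ with product topology
  haveI : ContinuousSMul ℝ (ULift.{u_1} ℝ) :=
    ⟨continuous_uliftUp.comp (continuous_fst.smul (continuous_uliftDown.comp continuous_snd))⟩
  -- Step 2: identify the span with an intersection of kernels.
  have key : ((Submodule.span ℝ (i '' Z) : Submodule ℝ V) : Set V) =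
      ⋂ (φ : X → ℝ) (_ : Continuous φ) (_ : ∀ z ∈ Z, φ z = 0)
        (g : V →L[ℝ] ULift.{u_1} ℝ) (_ : ∀ x, g (i x) = ULift.up (φ x)), (g ⁻¹' {0}) := by
    apply Set.Subset.antisymm
    · intro v hv
      simp only [Set.mem_iInter]
      intro φ hφc hφZ g hgφ
      have hle : Submodule.span ℝ (i '' Z) ≤ LinearMap.ker (g : V →ₗ[ℝ] ULift.{u_1} ℝ) := by
        rw [Submodule.span_le]
        rintro _ ⟨z, hz, rfl⟩
        have h1 : g (i z) = ULift.up (φ z) := hgφ z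
        have h2 : (ULift.up (φ z) : ULift.{u_1} ℝ) = 0 := by
          rw [hφZ z hz]; rfl
        simp only [SetLike.mem_coe, LinearMap.mem_ker]
        exact h1.trans h2
      have := hle hv
      simpa [LinearMap.mem_ker] using this
    · intro v hv
      simp only [Set.mem_iInter] at hv
      have hvtop : v ∈ Submodule.span ℝ (Set.range i) := by rw [hspan]; trivial
      rw [Finsupp.mem_span_range_iff_exists_finsupp] at hvtop
      obtain ⟨c, hc⟩ := hvtop
      have hsupp : (c.support : Set X) ⊆ Z := by
        intro x₀ hx₀
        by_contra hx₀Z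
        have hx₀s : x₀ ∈ c.support := hx₀
        set K : Set X := Z ∪ ((c.support.erase x₀ : Finset X) : Set X) with hK
        have hKc : IsClosed K :=
          hZ.union (Set.Finite.isClosed (Finset.finite_toSet _))
        have hx₀K : x₀ ∉ K := by
          rintro (h | h)
          · exact hx₀Z h
          · exact (Finset.notMem_erase x₀ _) (by exact_mod_cast h)
        obtain ⟨f, cf, hf0, hf1⟩ :=
          CompletelyRegularSpace.completely_regular x₀ K hKc hx₀K
        set φ : X → ℝ := fun y => 1 - (f y : ℝ) with hφ
        have hφc : Continuous φ := continuous_const.sub (continuous_subtype_val.comp cf)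
        have hφK : ∀ y ∈ K, φ y = 0 := by
          intro y hy
          have : f y = 1 := hf1 hy
          simp [φ, this]
        have hφZ : ∀ z ∈ Z, φ z = 0 := fun z hz => hφK z (Or.inl hz)
        have hφx₀ : φ x₀ = 1 := by simp [φ, hf0]
        obtain ⟨g, hgφ, -⟩ := hext (ULift.{u_1} ℝ) (fun x => ULift.up (φ x))
          (continuous_uliftUp.comp hφc)
        have hgv : g v = 0 := hv φ hφc hφZ g hgφ
        have hgv' : g v = ULift.up (c x₀) := by
          rw [← hc, Finsupp.sum, map_sum]
          have heach : ∀ x ∈ c.support, g (c x • i x) = ULift.up (c x * φ x) := by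
            intro x _
            rw [map_smul, hgφ x]
            rfl
          rw [Finset.sum_congr rfl heach, Finset.sum_eq_single x₀]
          · rw [hφx₀, mul_one]
          · intro b hb hbne
            have hbK : b ∈ K := Or.inr (by
              exact_mod_cast Finset.mem_erase.mpr ⟨hbne, hb⟩)
            rw [hφK b hbK, mul_zero]
            rfl
          · intro h; exact absurd hx₀s h
        rw [hgv] at hgv'
        have hc0 : c x₀ = 0 := by
          have := congrArg ULift.down hgv'.symm
          simpa using this
        exact (Finsupp.mem_support_iff.mp hx₀s) hc0
      rw [← hc]
      apply Submodule.sum_mem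
      intro x hx
      exact Submodule.smul_mem _ _
        (Submodule.subset_span (Set.mem_image_of_mem i (hsupp hx)))
  rw [key]
  refine isClosed_iInter fun φ => isClosed_iInter fun _ => isClosed_iInter fun _ =>
    isClosed_iInter fun g => isClosed_iInter fun _ => ?_
  exact isClosed_singleton.preimage g.continuous
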